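/- Let x, y, c be positive integers with y < x, and set n = c·x and m = c·y. For every j ∈ {0,…,m−1}, the number of integers i ∈ {0,…,n−1} such that ⌈i·y/x⌉ ≡ j (mod m) equals ⌊j·x/y⌋ − ⌊(j−1)·x/y⌋. Moreover, this count depends only on the residue of j modulo y: ⌊j·x/y⌋ − ⌊(j−1)·x/y⌋ = ⌊r·x/y⌋ − ⌊(r−1)·x/y⌋, where r = j mod y. -/

import Mathlib

open scoped Classical

/-- Ceiling division on natural numbers: `ceilDiv p q = ⌈p / q⌉` for `q > 0`. -/
def ceilDiv (p q : ℕ) : ℕ := (p + q - 1) / q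

lemma ceilDiv_le_iff {x : ℕ} (hx : 0 < x) (p k : ℕ) : ceilDiv p x ≤ k ↔ p ≤ x * k := by
  unfold ceilDiv
  rw [Nat.div_le_iff_le_mul_add_pred hx]
  generalize x * k = s
  omega

lemma ceilDiv_eq_iff {x : ℕ} (hx : 0 < x) (p j : ℕ) (hj : 0 < j) :
    ceilDiv p x = j ↔ x * (j - 1) < p ∧ p ≤ x * j := by
  have h1 := ceilDiv_le_iff hx p j
  have h2 := ceilDiv_le_iff hx p (j - 1)
  constructor
  · intro h
    refine ⟨?_, h1.1 h.le⟩
    by_contra hcon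
    push_neg at hcon
    have := h2.2 hcon
    omega
  · rintro ⟨ha, hb⟩
    have := h1.2 hb
    have : ¬ ceilDiv p x ≤ j - 1 := fun h => by have := h2.1 h; omega
    omega

lemma ceilDiv_eq_zero_iff {x : ℕ} (hx : 0 < x) (p : ℕ) : ceilDiv p x = 0 ↔ p = 0 := by
  have := ceilDiv_le_iff hx p 0
  simpa using this

lemma flq (a : ℤ) (x y : ℕ) : ⌊(((a : ℚ)) * x) / y⌋ = (a * x) / (y : ℤ) := by
  rw [show ((a : ℚ) * x) / y = (((a * x : ℤ) : ℚ)) / ((y : ℕ) : ℚ) by push_cast; ring]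
  exact Rat.floor_intCast_div_natCast _ _

theorem stmt_2 (x y c : ℕ) (hy : 0 < y) (hyx : y < x) (hc : 0 < c)
    (n m : ℕ) (hn : n = c * x) (hm : m = c * y) (j : ℕ) (hj : j < m) :
    (((Finset.range n).filter (fun i => Nat.ModEq m (ceilDiv (i * y) x) j)).card : ℤ)
      = ⌊((j : ℚ) * x) / y⌋ - ⌊(((j : ℚ) - 1) * x) / y⌋ ∧
    ⌊((j : ℚ) * x) / y⌋ - ⌊(((j : ℚ) - 1) * x) / y⌋
      = ⌊(((j % y : ℕ) : ℚ) * x) / y⌋ - ⌊((((j % y : ℕ) : ℚ) - 1) * x) / y⌋ := by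
  have hx : 0 < x := hy.trans hyx
  have hm1 : 0 < m := by rw [hm]; exact Nat.mul_pos hc hy
  have hn1 : 0 < n := by rw [hn]; exact Nat.mul_pos hc hx
  have hyZ : ((y : ℤ)) ≠ 0 := by exact_mod_cast hy.ne'
  -- floor rewrites
  have E1 : ⌊((j : ℚ) * x) / y⌋ = ((j : ℤ) * x) / (y : ℤ) := by
    rw [show ((j : ℚ)) = (((j : ℤ) : ℚ)) by push_cast; ring]; exact flq _ _ _
  have E2 : ⌊(((j : ℚ) - 1) * x) / y⌋ = (((j : ℤ) - 1) * x) / (y : ℤ) := by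
    rw [show ((j : ℚ) - 1) = (((j : ℤ) - 1 : ℤ) : ℚ) by push_cast; ring]; exact flq _ _ _
  have E3 : ⌊(((j % y : ℕ) : ℚ) * x) / y⌋ = (((j % y : ℕ) : ℤ) * x) / (y : ℤ) := by
    rw [show (((j % y : ℕ) : ℚ)) = ((((j % y : ℕ) : ℤ) : ℚ)) by rw [Int.cast_natCast]]; exact flq _ _ _
  have E4 : ⌊((((j % y : ℕ) : ℚ) - 1) * x) / y⌋ = ((((j % y : ℕ) : ℤ) - 1) * x) / (y : ℤ) := by
    rw [show (((j % y : ℕ) : ℚ) - 1) = ((((j % y : ℕ) : ℤ) - 1 : ℤ) : ℚ) by rw [Int.cast_sub, Int.cast_natCast, Int.cast_one]]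
    exact flq _ _ _
  rw [E1, E2, E3, E4]
  -- second part (mod y invariance), proven generally
  have hjd : (j : ℤ) = ((j % y : ℕ) : ℤ) + ((j / y : ℕ) : ℤ) * (y : ℤ) := by
    exact_mod_cast (Nat.mod_add_div' j y).symm
  have part2 : ((j : ℤ) * x) / (y : ℤ) - (((j : ℤ) - 1) * x) / (y : ℤ)
      = (((j % y : ℕ) : ℤ) * x) / (y : ℤ) - ((((j % y : ℕ) : ℤ) - 1) * x) / (y : ℤ) := by
    have a1 : (j : ℤ) * x = ((j % y : ℕ) : ℤ) * x + (((j / y : ℕ) : ℤ) * x) * (y : ℤ) := by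
      rw [hjd]; ring
    have a2 : ((j : ℤ) - 1) * x
        = (((j % y : ℕ) : ℤ) - 1) * x + (((j / y : ℕ) : ℤ) * x) * (y : ℤ) := by
      rw [hjd]; ring
    rw [a1, a2, Int.add_mul_ediv_right _ _ hyZ, Int.add_mul_ediv_right _ _ hyZ]
    ring
  refine ⟨?_, part2⟩
  -- facts
  have hxm : x * m = n * y := by rw [hn, hm]; ring
  have hmodred : ∀ i : ℕ, i < n →
      (Nat.ModEq m (ceilDiv (i * y) x) j ↔ (ceilDiv (i * y) x = j ∨ (j = 0 ∧ ceilDiv (i * y) x = m))) := by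
    intro i hi
    have hle : ceilDiv (i * y) x ≤ m := by
      rw [ceilDiv_le_iff hx]
      have : i * y ≤ (n - 1) * y := Nat.mul_le_mul_right y (by omega)
      have h2 : (n - 1) * y = n * y - y := by
        have : 1 ≤ n := hn1
        rw [Nat.sub_mul]; ring_nf
      omega
    constructor
    · intro h
      unfold Nat.ModEq at h
      rcases lt_or_eq_of_le hle with hlt | heq
      · left
        rwa [Nat.mod_eq_of_lt hlt, Nat.mod_eq_of_lt hj] at h
      · right
        rw [heq, Nat.mod_self, Nat.mod_eq_of_lt hj] at h
        exact ⟨h.symm, heq⟩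
    · rintro (rfl | ⟨rfl, hceq⟩)
      · rfl
      · rw [hceq]
        simpa [Nat.ModEq] using (Nat.mod_self m)
  -- K = ⌊x(m-1)/y⌋ bound
  have hKle : x * (m - 1) / y ≤ n - 1 := by
    have h1 : x * (m - 1) ≤ (n - 1) * y := by
      have e1 : x * (m - 1) = x * m - x := by rw [Nat.mul_sub]; ring_nf
      have e2 : (n - 1) * y = n * y - y := by rw [Nat.sub_mul]; ring_nf
      omega
    calc x * (m - 1) / y ≤ (n - 1) * y / y := Nat.div_le_div_right h1
      _ = n - 1 := Nat.mul_div_cancel _ hy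
  rcases Nat.eq_zero_or_pos j with rfl | hjpos
  -- case j = 0
  · set t := (x + y - 1) / y with ht
    have hty : x ≤ t * y ∧ t * y ≤ x + y - 1 := by
      have h1 := Nat.div_add_mod (x + y - 1) y
      have h2 : (x + y - 1) % y < y := Nat.mod_lt _ hy
      have h3 : y * ((x + y - 1) / y) = y * t := by rw [ht]
      have h4 : y * t = t * y := Nat.mul_comm _ _
      omega
    have htn : t ≤ x := by
      have h6 : t - 1 ≤ (t - 1) * y := Nat.le_mul_of_pos_right _ hy
      have h7 : (t - 1) * y = t * y - 1 * y := by rw [Nat.sub_mul]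
      omega
    have htn' : t ≤ n := by
      have : x ≤ n := by rw [hn]; exact Nat.le_mul_of_pos_left x hc
      omega
    have htpos : 0 < t := by
      have h5 : t ≤ t * y := Nat.le_mul_of_pos_right t hy
      nlinarith [hty.1]
    have hKval : x * (m - 1) / y = n - t := by
      have e1 : x * (m - 1) = (t * y - x) + (n - t) * y := by
        have e2 : x * (m - 1) = x * m - x := by rw [Nat.mul_sub]; ring_nf
        have e3 : (n - t) * y = n * y - t * y := by rw [Nat.sub_mul]
        have h6 : t * y ≤ n * y := Nat.mul_le_mul_right y htn'
        omega
      rw [e1, Nat.add_mul_div_right _ _ hy, Nat.div_eq_of_lt (by omega)]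
      omega
    -- set identification
    have hset : (Finset.range n).filter (fun i => Nat.ModEq m (ceilDiv (i * y) x) 0)
        = insert 0 (Finset.Ioc (x * (m - 1) / y) (n - 1)) := by
      ext i
      simp only [Finset.mem_filter, Finset.mem_range, Finset.mem_insert, Finset.mem_Ioc]
      constructor
      · rintro ⟨hi, hmod⟩
        rcases (hmodred i hi).1 hmod with h0 | ⟨-, hM⟩
        · left
          have := (ceilDiv_eq_zero_iff hx _).1 h0
          exact mul_eq_zero.1 this |>.resolve_right (by omega)
        · right
          have := (ceilDiv_eq_iff hx (i * y) m hm1).1 hM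
          constructor
          · rw [Nat.div_lt_iff_lt_mul hy]
            exact this.1
          · omega
      · rintro (rfl | ⟨hKi, hin⟩)
        · exact ⟨hn1, (hmodred 0 hn1).2 (Or.inl (by simp [ceilDiv_eq_zero_iff hx]))⟩
        · have hi : i < n := by omega
          refine ⟨hi, (hmodred i hi).2 (Or.inr ⟨rfl, ?_⟩)⟩
          rw [ceilDiv_eq_iff hx (i * y) m hm1]
          constructor
          · exact (Nat.div_lt_iff_lt_mul hy).1 hKi
          · have : i * y ≤ (n - 1) * y := Nat.mul_le_mul_right y (by omega)
            have e2 : (n - 1) * y = n * y - y := by rw [Nat.sub_mul]; ring_nf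
            omega
    rw [hset, Finset.card_insert_of_notMem (by simp), Nat.card_Ioc, hKval]
    -- RHS computation
    have hnegx : (-(x : ℤ)) / (y : ℤ) = -(t : ℤ) := by
      have e : (-(x : ℤ)) = ((t * y - x : ℕ) : ℤ) + (-(t : ℤ)) * (y : ℤ) := by
        have := hty.1
        push_cast [this]
        ring
      rw [e, Int.add_mul_ediv_right _ _ hyZ, Int.ediv_eq_zero_of_lt (by positivity)
        (by exact_mod_cast (by omega : t * y - x < y))]
      ring
    push_cast
    rw [show (-1 : ℤ) * (x : ℤ) = -(x : ℤ) by ring, hnegx,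
      show (0 : ℤ) * (x : ℤ) = 0 by ring, Int.zero_ediv]
    omega
  -- case j ≥ 1
  · set A := x * (j - 1) / y with hA
    set B := x * j / y with hB
    have hAB : A ≤ B := Nat.div_le_div_right (Nat.mul_le_mul_left x (by omega))
    have hBn : B ≤ n - 1 := by
      have : B ≤ x * (m - 1) / y := Nat.div_le_div_right (Nat.mul_le_mul_left x (by omega))
      omega
    have hset : (Finset.range n).filter (fun i => Nat.ModEq m (ceilDiv (i * y) x) j)
        = Finset.Ioc A B := by
      ext i
      simp only [Finset.mem_filter, Finset.mem_range, Finset.mem_Ioc]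
      constructor
      · rintro ⟨hi, hmod⟩
        rcases (hmodred i hi).1 hmod with hcj | ⟨h0, -⟩
        · have := (ceilDiv_eq_iff hx (i * y) j hjpos).1 hcj
          exact ⟨(Nat.div_lt_iff_lt_mul hy).2 this.1, (Nat.le_div_iff_mul_le hy).2 this.2⟩
        · omega
      · rintro ⟨hAi, hiB⟩
        have hi : i < n := by omega
        refine ⟨hi, (hmodred i hi).2 (Or.inl ?_)⟩
        rw [ceilDiv_eq_iff hx (i * y) j hjpos]
        exact ⟨(Nat.div_lt_iff_lt_mul hy).1 hAi, (Nat.le_div_iff_mul_le hy).1 hiB⟩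
    rw [hset, Nat.card_Ioc]
    have e1 : (j : ℤ) * x = ((x * j : ℕ) : ℤ) := by push_cast; ring
    have e2 : ((j : ℤ) - 1) * x = ((x * (j - 1) : ℕ) : ℤ) := by
      push_cast [hjpos]
      ring
    rw [e1, e2, ← Int.natCast_div, ← Int.natCast_div]
    omega
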